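/- arXiv:2204.07245 — 2 statements merged into one kernel-verified Lean document; each statement's English description precedes it below -/
import Mathlib

section
/- Let μ be a Borel measure on (0, +∞) with ∫₀^∞ (v ∧ v²) μ(dv) < +∞, let J_μ(b) = ∫₀^∞ (e^{−bv} − 1 + bv) μ(dv), and let c ≥ 0. Suppose that c·b² + J_μ(b) = Σ_{k=1}^g η_k·b^{α_k} for all b ≥ 0, where g ≥ 1, η_k > 0 and α_1, …, α_g ∈ (1, 2] are pairwise distinct with α_1 > α_2 > … > α_g. Then: (i) if α_1 = 2 then c = η_1 and J_μ(b) = Σ_{k=2}^g η_k·b^{α_k} (so every power actually appearing in J_μ has exponent in (1, 2)); (ii) if α_1 < 2 then c = 0 and J_μ(b) = Σ_{k=1}^g η_k·b^{α_k}. In particular, J_μ is a finite sum of powers b^{α} with exponents α strictly between 1 and 2 and positive coefficients (possibly the empty sum, i.e., J_μ ≡ 0). -/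
open Real Filter Set MeasureTheory

private lemma aux_nonneg {x : ℝ} (hx : 0 ≤ x) : 0 ≤ Real.exp (-x) - 1 + x := by
  have := Real.add_one_le_exp (-x)
  linarith

private lemma aux_le_id {x : ℝ} (hx : 0 ≤ x) : Real.exp (-x) - 1 + x ≤ x := by
  have : Real.exp (-x) ≤ 1 := Real.exp_le_one_iff.mpr (by linarith)
  linarith

private lemma aux_le_sq {x : ℝ} (hx : 0 ≤ x) : Real.exp (-x) - 1 + x ≤ x ^ 2 := by
  rcases le_or_gt x 1 with h | h
  · have h1 : |(-x)| ≤ 1 := by rw [abs_neg, abs_of_nonneg hx]; exact h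
    have h2 := Real.abs_exp_sub_one_sub_id_le h1
    have h3 : Real.exp (-x) - 1 - (-x) ≤ (-x) ^ 2 := (abs_le.mp h2).2
    calc Real.exp (-x) - 1 + x = Real.exp (-x) - 1 - (-x) := by ring
    _ ≤ (-x) ^ 2 := h3
    _ = x ^ 2 := by ring
  · have h1 : x ≤ x ^ 2 := by nlinarith
    exact (aux_le_id hx).trans h1

/-- The key analytic fact: `J_μ(b)/b² → 0` as `b → ∞`. -/
private lemma aux_tendsto (μ : Measure ℝ)
    (hμ : ∫⁻ v in Set.Ioi (0:ℝ), ENNReal.ofReal (min v (v ^ 2)) ∂μ < ⊤) :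
    Tendsto (fun b : ℝ =>
      (∫ v in Set.Ioi (0:ℝ), (Real.exp (-(b * v)) - 1 + b * v) ∂μ) / b ^ 2)
      atTop (nhds 0) := by
  have hbound : Integrable (fun v : ℝ => min v (v ^ 2)) (μ.restrict (Set.Ioi 0)) := by
    refine ⟨(continuous_id.min (continuous_pow 2)).aestronglyMeasurable, ?_⟩
    have hnn : 0 ≤ᶠ[ae (μ.restrict (Set.Ioi 0))] fun v : ℝ => min v (v ^ 2) := by
      filter_upwards [ae_restrict_mem measurableSet_Ioi] with v hv
      exact le_min (le_of_lt hv) (by positivity)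
    exact (hasFiniteIntegral_iff_ofReal hnn).mpr hμ
  have key : Tendsto (fun b : ℝ =>
      ∫ v in Set.Ioi (0:ℝ), (Real.exp (-(b * v)) - 1 + b * v) / b ^ 2 ∂μ)
      atTop (nhds (∫ v in Set.Ioi (0:ℝ), (0:ℝ) ∂μ)) := by
    apply tendsto_integral_filter_of_dominated_convergence (fun v : ℝ => min v (v ^ 2))
    · filter_upwards with b
      exact (((Continuous.sub (by continuity) continuous_const).add
        (by continuity)).div_const _).aestronglyMeasurable
    · filter_upwards [eventually_ge_atTop (1:ℝ)] with b hb
      filter_upwards [ae_restrict_mem measurableSet_Ioi] with v hv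
      have hb0 : (0:ℝ) < b := lt_of_lt_of_le one_pos hb
      have hv' : (0:ℝ) < v := hv
      have hbv : 0 ≤ b * v := by positivity
      have hF0 : 0 ≤ (Real.exp (-(b * v)) - 1 + b * v) / b ^ 2 :=
        div_nonneg (aux_nonneg hbv) (by positivity)
      rw [Real.norm_eq_abs, abs_of_nonneg hF0]
      refine le_min ?_ ?_
      · calc (Real.exp (-(b * v)) - 1 + b * v) / b ^ 2
            ≤ (b * v) / b ^ 2 := by
              apply div_le_div_of_nonneg_right (aux_le_id hbv) (by positivity)
        _ = v / b := by field_simp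
        _ ≤ v := by
              rw [div_le_iff₀ hb0]
              nlinarith [le_of_lt hv']
      · calc (Real.exp (-(b * v)) - 1 + b * v) / b ^ 2
            ≤ (b * v) ^ 2 / b ^ 2 := by
              apply div_le_div_of_nonneg_right (aux_le_sq hbv) (by positivity)
        _ = v ^ 2 := by field_simp
    · exact hbound
    · filter_upwards [ae_restrict_mem measurableSet_Ioi] with v hv
      have hv' : (0:ℝ) < v := hv
      apply squeeze_zero'
      · filter_upwards [eventually_gt_atTop (0:ℝ)] with b hb
        exact div_nonneg (aux_nonneg (by positivity)) (by positivity)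
      · filter_upwards [eventually_gt_atTop (0:ℝ)] with b hb
        calc (Real.exp (-(b * v)) - 1 + b * v) / b ^ 2
            ≤ (b * v) / b ^ 2 := by
              apply div_le_div_of_nonneg_right (aux_le_id (by positivity)) (by positivity)
        _ = v * b⁻¹ := by field_simp
      · have : Tendsto (fun b : ℝ => v * b⁻¹) atTop (nhds (v * 0)) :=
          tendsto_inv_atTop_zero.const_mul v
        simpa using this
  simp only [integral_zero] at key
  refine key.congr (fun b => ?_)
  rw [integral_div]

/-- Corollary on the form of `J_μ`: if `c·b² + J_μ(b) = Σ_{k<g} η_k b^{α_k}` with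
`η_k > 0` and strictly decreasing exponents `α_k ∈ (1,2]`, then either `α_0 = 2`, in
which case `c = η_0` and `J_μ(b) = Σ_{1≤k<g} η_k b^{α_k}`, or `α_0 < 2`, in which case
`c = 0` and `J_μ(b) = Σ_{k<g} η_k b^{α_k}`. -/
theorem stmt9 (μ : Measure ℝ)
    (hμ : ∫⁻ v in Set.Ioi (0:ℝ), ENNReal.ofReal (min v (v ^ 2)) ∂μ < ⊤)
    (Jμ : ℝ → ℝ)
    (hJμ : ∀ b ≥ (0:ℝ), Jμ b = ∫ v in Set.Ioi (0:ℝ), (Real.exp (-(b * v)) - 1 + b * v) ∂μ)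
    (c : ℝ) (hc : 0 ≤ c)
    (g : ℕ) (hg : 1 ≤ g)
    (η α : ℕ → ℝ)
    (hη : ∀ k < g, 0 < η k)
    (hα : ∀ k < g, α k ∈ Set.Ioc (1:ℝ) 2)
    (hdec : ∀ k l, k < l → l < g → α l < α k)
    (heq : ∀ b ≥ (0:ℝ), c * b ^ 2 + Jμ b = ∑ k ∈ Finset.range g, η k * b ^ α k) :
    (α 0 = 2 → c = η 0 ∧ ∀ b ≥ (0:ℝ), Jμ b = ∑ k ∈ Finset.Ico 1 g, η k * b ^ α k) ∧
    (α 0 < 2 → c = 0 ∧ ∀ b ≥ (0:ℝ), Jμ b = ∑ k ∈ Finset.range g, η k * b ^ α k) := by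
  -- `c + Jμ b / b² → c` at infinity
  have hJt : Tendsto (fun b : ℝ => c + Jμ b / b ^ 2) atTop (nhds c) := by
    have h0 := aux_tendsto μ hμ
    have h1 : Tendsto (fun b : ℝ => Jμ b / b ^ 2) atTop (nhds 0) := by
      apply h0.congr'
      filter_upwards [eventually_ge_atTop (0:ℝ)] with b hb
      rw [hJμ b hb]
    simpa using (tendsto_const_nhds (x := c)).add h1
  -- the same function equals the power sum divided by `b²` eventually
  have hEq : (fun b : ℝ => c + Jμ b / b ^ 2) =ᶠ[atTop]
      (fun b : ℝ => ∑ k ∈ Finset.range g, η k * b ^ (α k - 2)) := by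
    filter_upwards [eventually_gt_atTop (0:ℝ)] with b hb
    have hb2 : (0:ℝ) < b ^ 2 := by positivity
    have := heq b (le_of_lt hb)
    have hdiv : (c * b ^ 2 + Jμ b) / b ^ 2
        = (∑ k ∈ Finset.range g, η k * b ^ α k) / b ^ 2 := by rw [this]
    calc c + Jμ b / b ^ 2 = (c * b ^ 2 + Jμ b) / b ^ 2 := by field_simp
      _ = (∑ k ∈ Finset.range g, η k * b ^ α k) / b ^ 2 := hdiv
      _ = ∑ k ∈ Finset.range g, η k * b ^ (α k - 2) := by
          rw [Finset.sum_div]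
          refine Finset.sum_congr rfl (fun k _ => ?_)
          rw [Real.rpow_sub hb, Real.rpow_two]
          ring
  -- limit of an individual term with exponent `< 2`
  have hterm : ∀ k, α k < 2 →
      Tendsto (fun b : ℝ => η k * b ^ (α k - 2)) atTop (nhds 0) := by
    intro k hk
    have h1 : Tendsto (fun b : ℝ => b ^ (α k - 2)) atTop (nhds 0) := by
      have := tendsto_rpow_neg_atTop (y := 2 - α k) (by linarith)
      simpa [neg_sub] using this
    simpa using h1.const_mul (η k)
  constructor
  · -- case α 0 = 2
    intro hα0
    have hlt : ∀ k ∈ Finset.Ico 1 g, α k < 2 := by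
      intro k hk
      rw [Finset.mem_Ico] at hk
      have := hdec 0 k hk.1 hk.2
      linarith
    -- limit of the sum is η 0
    have hsum : Tendsto (fun b : ℝ => ∑ k ∈ Finset.range g, η k * b ^ (α k - 2))
        atTop (nhds (η 0)) := by
      have hsplit : ∀ b : ℝ, 0 < b →
          (∑ k ∈ Finset.range g, η k * b ^ (α k - 2))
            = η 0 * b ^ (α 0 - 2) + ∑ k ∈ Finset.Ico 1 g, η k * b ^ (α k - 2) := by
        intro b hb
        rw [Finset.range_eq_Ico, Finset.sum_eq_sum_Ico_succ_bot hg]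
      have h1 : Tendsto (fun b : ℝ => η 0 * b ^ (α 0 - 2) +
          ∑ k ∈ Finset.Ico 1 g, η k * b ^ (α k - 2)) atTop (nhds (η 0 + 0)) := by
        refine Tendsto.add ?_ ?_
        · have : ∀ᶠ b : ℝ in atTop, η 0 = η 0 * b ^ (α 0 - 2) := by
            filter_upwards [eventually_gt_atTop (0:ℝ)] with b hb
            rw [hα0]
            simp
          exact tendsto_const_nhds.congr' this
        · have := tendsto_finset_sum (Finset.Ico 1 g)
            (fun k hk => hterm k (hlt k hk))
          simpa using this
      rw [add_zero] at h1
      apply h1.congr'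
      filter_upwards [eventually_gt_atTop (0:ℝ)] with b hb
      exact (hsplit b hb).symm
    have hc0 : c = η 0 := tendsto_nhds_unique (hJt.congr' hEq) hsum
    refine ⟨hc0, fun b hb => ?_⟩
    have h2 := heq b hb
    have hpow : η 0 * b ^ α 0 = c * b ^ 2 := by
      rw [hα0, hc0, Real.rpow_two]
    have hsplit : (∑ k ∈ Finset.range g, η k * b ^ α k)
        = η 0 * b ^ α 0 + ∑ k ∈ Finset.Ico 1 g, η k * b ^ α k := by
      rw [Finset.range_eq_Ico, Finset.sum_eq_sum_Ico_succ_bot hg]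
    rw [hsplit, hpow] at h2
    linarith
  · -- case α 0 < 2
    intro hα0
    have hlt : ∀ k ∈ Finset.range g, α k < 2 := by
      intro k hk
      rw [Finset.mem_range] at hk
      rcases Nat.eq_zero_or_pos k with h | h
      · rw [h]; exact hα0
      · have := hdec 0 k h hk
        linarith
    have hsum : Tendsto (fun b : ℝ => ∑ k ∈ Finset.range g, η k * b ^ (α k - 2))
        atTop (nhds 0) := by
      have := tendsto_finset_sum (Finset.range g) (fun k hk => hterm k (hlt k hk))
      simpa using this
    have hc0 : c = 0 := tendsto_nhds_unique (hJt.congr' hEq) hsum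
    refine ⟨hc0, fun b hb => ?_⟩
    have h2 := heq b hb
    rw [hc0] at h2
    linarith
end

section
/- Let g : (0, +∞) → [0, +∞) be measurable with ∫₀^∞ (v² ∧ v)·g(v) dv < +∞, with ∫₀^∞ v²·g(v) dv = +∞, and with g(y) > 0 for all sufficiently large y. Define J(b) = ∫₀^∞ (e^{−bv} − 1 + bv)·g(v) dv for b ≥ 0. If, for some α ∈ (1, 2), lim_{y→+∞} g(b·y)/g(y) = b^{−α−1} for every b > 0, then lim_{x→0+} J(b·x)/J(x) = b^α for every b > 0. -/
open Real Filter Set MeasureTheory Topology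


private lemma deriv_mono_aux {f f' : ℝ → ℝ} (hf : ∀ x, HasDerivAt f (f' x) x)
    (h0 : ∀ x, 0 ≤ x → 0 ≤ f' x) {a b : ℝ} (ha : 0 ≤ a) (hab : a ≤ b) : f a ≤ f b := by
  have hdiff : Differentiable ℝ f := fun x => (hf x).differentiableAt
  have hmono : MonotoneOn f (Ici 0) :=
    monotoneOn_of_deriv_nonneg (convex_Ici (0:ℝ)) hdiff.continuous.continuousOn
      hdiff.differentiableOn
      (fun x hx => by
        rw [(hf x).deriv]
        exact h0 x (le_of_lt (by simpa [interior_Ici] using hx)))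
  exact hmono ha (ha.trans hab) hab

private lemma aux_exp_le {u : ℝ} (hu : 0 ≤ u) : Real.exp (-u) ≤ 1 - u + u^2/2 := by
  have key : ∀ x : ℝ, HasDerivAt (fun t => 1 - t + t^2/2 - Real.exp (-t))
      (-1 + x + Real.exp (-x)) x := by
    intro x
    have h1 : HasDerivAt (fun t : ℝ => Real.exp (-t)) (Real.exp (-x) * (-1)) x :=
      (hasDerivAt_neg x).exp
    have h2 : HasDerivAt (fun t : ℝ => 1 - t + t^2/2) (0 - 1 + (2 * x ^ 1)/2) x :=
      (((hasDerivAt_const x (1:ℝ)).sub (hasDerivAt_id x)).add ((hasDerivAt_pow 2 x).div_const 2))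
    have : HasDerivAt (fun t => (1 - t + t^2/2) - Real.exp (-t)) _ x := h2.sub h1
    convert this using 1
    ring
  have h := deriv_mono_aux key (fun x hx => by
    have := Real.add_one_le_exp (-x); linarith) le_rfl hu
  simp at h
  linarith

private lemma aux_exp_ge {u : ℝ} (hu : 0 ≤ u) : 1 - u + u^2/2 - u^3/6 ≤ Real.exp (-u) := by
  have key : ∀ x : ℝ, HasDerivAt (fun t => Real.exp (-t) - (1 - t + t^2/2 - t^3/6))
      (1 - x + x^2/2 - Real.exp (-x)) x := by
    intro x
    have h1 : HasDerivAt (fun t : ℝ => Real.exp (-t)) (Real.exp (-x) * (-1)) x :=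
      (hasDerivAt_neg x).exp
    have h2 : HasDerivAt (fun t : ℝ => 1 - t + t^2/2 - t^3/6)
        (0 - 1 + (2 * x ^ 1)/2 - (3 * x ^ 2)/6) x :=
      ((((hasDerivAt_const x (1:ℝ)).sub (hasDerivAt_id x)).add
        ((hasDerivAt_pow 2 x).div_const 2)).sub ((hasDerivAt_pow 3 x).div_const 6))
    have : HasDerivAt (fun t => Real.exp (-t) - (1 - t + t^2/2 - t^3/6)) _ x := h1.sub h2
    convert this using 1
    ring
  have h := deriv_mono_aux key (fun x hx => by
    have := aux_exp_le hx; linarith) le_rfl hu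
  simp at h
  linarith

private lemma phi_nonneg (u : ℝ) : 0 ≤ Real.exp (-u) - 1 + u := by
  have := Real.add_one_le_exp (-u); linarith

private lemma phi_le_sq {u : ℝ} (hu : 0 ≤ u) : Real.exp (-u) - 1 + u ≤ u^2/2 := by
  have := aux_exp_le hu; linarith

private lemma phi_le_lin {u : ℝ} (hu : 0 ≤ u) : Real.exp (-u) - 1 + u ≤ u := by
  have : Real.exp (-u) ≤ 1 := Real.exp_le_one_iff.mpr (by linarith)
  linarith

private lemma phi_ge {u : ℝ} (hu : 0 ≤ u) (hu' : u ≤ 3/2) : u^2/4 ≤ Real.exp (-u) - 1 + u := by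
  have h1 := aux_exp_ge hu
  nlinarith [sq_nonneg u, mul_le_mul_of_nonneg_left hu' (sq_nonneg u)]


private lemma uct {h : ℝ → ℝ} (hmeas : Measurable h)
    (hlim : ∀ t : ℝ, Tendsto (fun u => h (u + t) - h u) atTop (𝓝 0)) :
    ∀ ε > (0:ℝ), ∃ U : ℝ, ∀ u ≥ U, ∀ t ∈ Icc (0:ℝ) 1, |h (u + t) - h u| ≤ ε := by
  intro ε hε
  by_contra hcon
  push_neg at hcon
  choose uu huu tt htt hgt using hcon
  set un : ℕ → ℝ := fun n => uu (n:ℝ) with hundef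
  set tn : ℕ → ℝ := fun n => tt (n:ℝ) with htndef
  have hun : Tendsto un atTop atTop :=
    tendsto_atTop_mono (fun n => huu (n:ℝ)) tendsto_natCast_atTop_atTop
  have htn0 : ∀ n, 0 ≤ tn n := fun n => (htt (n:ℝ)).1
  have htn1 : ∀ n, tn n ≤ 1 := fun n => (htt (n:ℝ)).2
  have hvn : Tendsto (fun n => un n + tn n) atTop atTop :=
    tendsto_atTop_mono (fun n => le_add_of_nonneg_right (htn0 n)) hun
  set F : ℕ → ℝ → ℝ := fun n s => h (un n + s) - h (un n) with hFdef
  set G : ℕ → ℝ → ℝ := fun n s => h (un n + tn n + s) - h (un n + tn n) with hGdef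
  have hFlim : ∀ s : ℝ, Tendsto (fun n => F n s) atTop (𝓝 0) := fun s => (hlim s).comp hun
  have hGlim : ∀ s : ℝ, Tendsto (fun n => G n s) atTop (𝓝 0) := fun s => (hlim s).comp hvn
  have hFmeas : ∀ n, StronglyMeasurable (F n) := fun n =>
    ((hmeas.comp (measurable_const_add (un n))).sub measurable_const).stronglyMeasurable
  have hGmeas : ∀ n, StronglyMeasurable (G n) := fun n =>
    ((hmeas.comp (measurable_const_add (un n + tn n))).sub measurable_const).stronglyMeasurable
  have hs2 : volume (Icc (0:ℝ) 2) ≠ ⊤ := by simp [Real.volume_Icc]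
  obtain ⟨E₁, hE₁sub, hE₁meas, hE₁μ, hE₁unif⟩ :=
    tendstoUniformlyOn_of_ae_tendsto hFmeas stronglyMeasurable_const measurableSet_Icc hs2
      (ae_of_all _ fun s _ => hFlim s) (by norm_num : (0:ℝ) < 1/8)
  obtain ⟨E₂, hE₂sub, hE₂meas, hE₂μ, hE₂unif⟩ :=
    tendstoUniformlyOn_of_ae_tendsto hGmeas stronglyMeasurable_const measurableSet_Icc hs2
      (ae_of_all _ fun s _ => hGlim s) (by norm_num : (0:ℝ) < 1/8)
  set E : Set ℝ := (Icc (0:ℝ) 2 \ E₁) ∩ (Icc (0:ℝ) 2 \ E₂) with hEdef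
  have hEmeas : MeasurableSet E :=
    (measurableSet_Icc.diff hE₁meas).inter (measurableSet_Icc.diff hE₂meas)
  have hEsub : E ⊆ Icc (0:ℝ) 2 := fun x hx => hx.1.1
  have hEμ : ENNReal.ofReal (7/4) ≤ volume E := by
    have hsub : Icc (0:ℝ) 2 \ (E₁ ∪ E₂) ⊆ E := fun x hx =>
      ⟨⟨hx.1, fun h' => hx.2 (Or.inl h')⟩, ⟨hx.1, fun h' => hx.2 (Or.inr h')⟩⟩
    refine le_trans ?_ (measure_mono hsub)
    have h1 : volume (Icc (0:ℝ) 2) ≤ volume (Icc (0:ℝ) 2 \ (E₁ ∪ E₂)) + volume (E₁ ∪ E₂) := by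
      refine le_trans (measure_mono ?_) (measure_union_le _ _)
      intro x hx
      by_cases hx' : x ∈ E₁ ∪ E₂
      · exact Or.inr hx'
      · exact Or.inl ⟨hx, hx'⟩
    have h2 : volume (E₁ ∪ E₂) ≤ ENNReal.ofReal (1/4) := by
      refine le_trans (measure_union_le _ _) ?_
      calc volume E₁ + volume E₂ ≤ ENNReal.ofReal (1/8) + ENNReal.ofReal (1/8) :=
            add_le_add hE₁μ hE₂μ
        _ = ENNReal.ofReal (1/4) := by
            rw [← ENNReal.ofReal_add (by norm_num) (by norm_num)]; norm_num
    by_contra hlt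
    push_neg at hlt
    have h3 : volume (Icc (0:ℝ) 2 \ (E₁ ∪ E₂)) + volume (E₁ ∪ E₂)
        < ENNReal.ofReal (7/4) + ENNReal.ofReal (1/4) :=
      lt_of_le_of_lt (add_le_add_right h2 _)
        (ENNReal.add_lt_add_right ENNReal.ofReal_ne_top hlt)
    rw [← ENNReal.ofReal_add (by norm_num) (by norm_num)] at h3
    norm_num at h3
    have h4 := lt_of_le_of_lt h1 h3
    rw [Real.volume_Icc] at h4
    norm_num at h4
  have hkey : ∀ n : ℕ, ∃ r, r ∈ E ∧ tn n + r ∈ E := by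
    intro n
    by_contra hem
    push_neg at hem
    set B : Set ℝ := (fun r => tn n + r) ⁻¹' E with hBdef
    have hdisj : Disjoint E B := by
      rw [Set.disjoint_left]
      intro r hrE hrB
      exact hem r hrE hrB
    have hBmeas : MeasurableSet B := hEmeas.preimage (measurable_const_add _)
    have hBμ : volume B = volume E := measure_preimage_add volume (tn n) E
    have hunion : E ∪ B ⊆ Icc (-1:ℝ) 2 := by
      rintro x (hx | hx)
      · have := hEsub hx
        exact ⟨by linarith [this.1], this.2⟩
      · have h5 := hEsub hx
        have h6 := htn0 n
        have h7 := htn1 n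
        exact ⟨by simp at h5; linarith [h5.1], by simp at h5; linarith [h5.1]⟩
    have hEB : volume (E ∪ B) = volume E + volume B := measure_union hdisj hBmeas
    have hle : volume (E ∪ B) ≤ ENNReal.ofReal 3 := by
      refine le_trans (measure_mono hunion) ?_
      rw [Real.volume_Icc]
      norm_num
    rw [hEB, hBμ] at hle
    have h8 : ENNReal.ofReal (7/4) + ENNReal.ofReal (7/4) ≤ ENNReal.ofReal 3 :=
      le_trans (add_le_add hEμ hEμ) hle
    rw [← ENNReal.ofReal_add (by norm_num) (by norm_num)] at h8
    rw [ENNReal.ofReal_le_ofReal_iff (by norm_num)] at h8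
    norm_num at h8
  choose rr hrE hrtE using hkey
  rw [Metric.tendstoUniformlyOn_iff] at hE₁unif hE₂unif
  obtain ⟨N₁, hN₁⟩ := (hE₁unif (ε/2) (by linarith)).exists_forall_of_atTop
  obtain ⟨N₂, hN₂⟩ := (hE₂unif (ε/2) (by linarith)).exists_forall_of_atTop
  set n := max N₁ N₂ with hndef
  have hFsmall : |F n (tn n + rr n)| < ε/2 := by
    have := hN₁ n (le_max_left _ _) (tn n + rr n) ⟨(hrtE n).1.1, (hrtE n).1.2⟩
    rw [Real.dist_eq] at this
    simpa using this
  have hGsmall : |G n (rr n)| < ε/2 := by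
    have := hN₂ n (le_max_right _ _) (rr n) ⟨(hrE n).2.1, (hrE n).2.2⟩
    rw [Real.dist_eq] at this
    simpa using this
  have heq : F n (tn n + rr n) - G n (rr n) = h (un n + tn n) - h (un n) := by
    simp only [hFdef, hGdef]
    ring_nf
  have hbig := hgt (n : ℝ)
  have : |h (un n + tn n) - h (un n)| < ε := by
    rw [← heq]
    calc |F n (tn n + rr n) - G n (rr n)| ≤ |F n (tn n + rr n)| + |G n (rr n)| := abs_sub _ _
      _ < ε/2 + ε/2 := add_lt_add hFsmall hGsmall
      _ = ε := by ring
  exact absurd hbig (not_lt.mpr this.le)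


private lemma potter_h {h : ℝ → ℝ}
    (huct : ∀ ε > (0:ℝ), ∃ U : ℝ, ∀ u ≥ U, ∀ t ∈ Icc (0:ℝ) 1, |h (u + t) - h u| ≤ ε) :
    ∀ ε > (0:ℝ), ∃ U : ℝ, ∀ u ≥ U, ∀ T ≥ (0:ℝ), |h (u + T) - h u| ≤ ε * (T + 1) := by
  intro ε hε
  obtain ⟨U, hU⟩ := huct ε hε
  refine ⟨U, fun u hu T hT => ?_⟩
  have claim : ∀ n : ℕ, ∀ T : ℝ, 0 ≤ T → T ≤ n + 1 → |h (u + T) - h u| ≤ ε * (n + 1) := by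
    intro n
    induction n with
    | zero =>
      intro T hT0 hT1
      have := hU u hu T ⟨hT0, by exact_mod_cast (by simpa using hT1)⟩
      simpa using this
    | succ n ih =>
      intro T hT0 hT1
      by_cases hc : T ≤ n + 1
      · refine le_trans (ih T hT0 hc) ?_
        have : (0:ℝ) ≤ ε := hε.le
        push_cast
        nlinarith
      · push_neg at hc
        have hT1' : (0:ℝ) ≤ T - 1 := by
          have : (0:ℝ) ≤ (n:ℝ) := Nat.cast_nonneg n
          linarith
        have h1 : |h ((u + (T-1)) + 1) - h (u + (T-1))| ≤ ε := by
          refine hU (u + (T-1)) (by linarith) 1 ⟨zero_le_one, le_rfl⟩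
        have h2 : |h (u + (T-1)) - h u| ≤ ε * (n + 1) := by
          refine ih (T-1) hT1' (by push_cast at hT1 ⊢; linarith)
        have heq : (u + (T-1)) + 1 = u + T := by ring
        rw [heq] at h1
        calc |h (u + T) - h u| = |(h (u + T) - h (u + (T-1))) + (h (u + (T-1)) - h u)| := by
              ring_nf
          _ ≤ |h (u + T) - h (u + (T-1))| + |h (u + (T-1)) - h u| := abs_add_le _ _
          _ ≤ ε + ε * (n + 1) := add_le_add h1 h2
          _ = ε * (n + 1 + 1) := by ring
          _ = ε * (↑(n+1) + 1) := by push_cast; ring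
  have h1 := claim ⌊T⌋₊ T hT (by linarith [Nat.lt_floor_add_one T])
  refine le_trans h1 ?_
  have h2 : (⌊T⌋₊ : ℝ) ≤ T := Nat.floor_le hT
  nlinarith
private lemma potter (g : ℝ → ℝ) (hgmeas : Measurable g) (α : ℝ) (Y₀ : ℝ) (hY₀ : 1 ≤ Y₀)
    (hpos : ∀ y ≥ Y₀, 0 < g y)
    (hreg : ∀ b > (0:ℝ), Tendsto (fun y => g (b * y) / g y) atTop (𝓝 (b ^ (-α - 1))))
    (ε : ℝ) (hε : 0 < ε) :
    ∃ Y₁, Y₀ ≤ Y₁ ∧ 1 ≤ Y₁ ∧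
      (∀ y, Y₁ ≤ y → ∀ w, 0 < w → Y₁ ≤ w * y →
        g (w * y) ≤ Real.exp ε * (w ^ (-α-1) * (w ^ ε + w ^ (-ε))) * g y) ∧
      (∀ y, Y₁ ≤ y → ∀ w, 1 ≤ w →
        Real.exp (-ε) * (w ^ (-α-1) * w ^ (-ε)) * g y ≤ g (w * y)) := by
  have hY₀pos : (0:ℝ) < Y₀ := lt_of_lt_of_le zero_lt_one hY₀
  set h : ℝ → ℝ := fun u => (α+1) * u + Real.log (g (Real.exp u)) with hdef
  have hmeas : Measurable h :=
    (measurable_const.mul measurable_id).add ((hgmeas.comp measurable_exp).log)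
  have hlim : ∀ t : ℝ, Tendsto (fun u => h (u + t) - h u) atTop (𝓝 0) := by
    intro t
    have hb : (0:ℝ) < Real.exp t := exp_pos t
    have h1 : Tendsto (fun u => g (Real.exp t * Real.exp u) / g (Real.exp u)) atTop
        (𝓝 (Real.exp t ^ (-α-1))) := (hreg _ hb).comp tendsto_exp_atTop
    have hlimpos : (0:ℝ) < Real.exp t ^ (-α-1) := rpow_pos_of_pos hb _
    have h2 : Tendsto (fun u => Real.log (g (Real.exp t * Real.exp u) / g (Real.exp u))) atTop
        (𝓝 (Real.log (Real.exp t ^ (-α-1)))) :=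
      ((Real.continuousAt_log hlimpos.ne').tendsto).comp h1
    have h3 : Real.log (Real.exp t ^ (-α-1)) = (-α-1) * t := by
      rw [Real.log_rpow hb, Real.log_exp]
    rw [h3] at h2
    have h4 : Tendsto (fun u => (α+1) * t + Real.log (g (Real.exp t * Real.exp u) / g (Real.exp u)))
        atTop (𝓝 ((α+1) * t + (-α-1) * t)) := h2.const_add _
    have h5 : (α+1) * t + (-α-1) * t = 0 := by ring
    rw [h5] at h4
    apply h4.congr'
    filter_upwards [eventually_ge_atTop (max (Real.log Y₀) (Real.log Y₀ - t))] with u hu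
    have hgu : 0 < g (Real.exp u) := by
      apply hpos
      calc Y₀ = Real.exp (Real.log Y₀) := (Real.exp_log hY₀pos).symm
        _ ≤ Real.exp u := exp_le_exp.mpr (le_trans (le_max_left _ _) hu)
    have hgut : 0 < g (Real.exp t * Real.exp u) := by
      apply hpos
      rw [← Real.exp_add]
      calc Y₀ = Real.exp (Real.log Y₀) := (Real.exp_log hY₀pos).symm
        _ ≤ Real.exp (t + u) := by
            apply exp_le_exp.mpr
            have := le_trans (le_max_right _ _) hu
            linarith
    simp only [hdef]
    rw [Real.log_div hgut.ne' hgu.ne', Real.exp_add]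
    rw [show Real.exp u * Real.exp t = Real.exp t * Real.exp u from mul_comm _ _]
    ring
  obtain ⟨U, hU⟩ := potter_h (uct hmeas hlim) ε hε
  set U' : ℝ := max U (Real.log Y₀) with hU'def
  refine ⟨max (Real.exp U') Y₀, le_max_right _ _, le_trans hY₀ (le_max_right _ _), ?_, ?_⟩
  · -- upper bound
    intro y hy w hw hwy
    set Y₁ := max (Real.exp U') Y₀ with hY₁def
    have hY₁pos : (0:ℝ) < Y₁ := lt_of_lt_of_le hY₀pos (le_max_right _ _)
    have hy0 : (0:ℝ) < y := lt_of_lt_of_le hY₁pos hy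
    have hwy0 : (0:ℝ) < w * y := mul_pos hw hy0
    have hgy : 0 < g y := hpos y (le_trans (le_max_right _ _) hy)
    have hgwy : 0 < g (w * y) := hpos _ (le_trans (le_max_right _ _) hwy)
    -- key: |h(log(w*y)) - h(log y)| ≤ ε * (|log w| + 1)
    have hu'y : U' ≤ Real.log y := by
      have h9 : Real.exp U' ≤ y := le_trans (le_max_left _ _) hy
      calc U' = Real.log (Real.exp U') := (Real.log_exp U').symm
        _ ≤ Real.log y := (Real.log_le_log_iff (exp_pos _) hy0).mpr h9
    have hkey : |h (Real.log (w * y)) - h (Real.log y)| ≤ ε * (|Real.log w| + 1) := by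
      rcases le_or_gt 1 w with hw1 | hw1
      · have hlw : 0 ≤ Real.log w := Real.log_nonneg hw1
        have := hU (Real.log y) (le_trans (le_max_left _ _) hu'y) (Real.log w) hlw
        rw [← Real.log_mul hy0.ne' (by positivity), mul_comm y w] at this
        rwa [abs_of_nonneg hlw]
      · have hlw : Real.log w < 0 := Real.log_neg hw hw1
        have hu' : U' ≤ Real.log (w * y) := by
          have h9 : Real.exp U' ≤ w * y := le_trans (le_max_left _ _) hwy
          calc U' = Real.log (Real.exp U') := (Real.log_exp U').symm
            _ ≤ Real.log (w * y) := (Real.log_le_log_iff (exp_pos _) hwy0).mpr h9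
        have := hU (Real.log (w * y)) (le_trans (le_max_left _ _) hu') (-Real.log w)
          (by linarith)
        rw [show Real.log (w * y) + -Real.log w = Real.log y by
          rw [Real.log_mul hw.ne' hy0.ne']; ring] at this
        rw [abs_sub_comm] at this
        rwa [abs_of_neg hlw]
    -- translate
    have hhy : h (Real.log y) = (α+1) * Real.log y + Real.log (g y) := by
      simp only [hdef]; rw [Real.exp_log hy0]
    have hhwy : h (Real.log (w*y)) = (α+1) * Real.log (w*y) + Real.log (g (w*y)) := by
      simp only [hdef]; rw [Real.exp_log hwy0]
    rw [hhy, hhwy, Real.log_mul hw.ne' hy0.ne'] at hkey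
    have hkey2 : Real.log (g (w*y)) - Real.log (g y) ≤ -(α+1) * Real.log w + ε * (|Real.log w| + 1) := by
      have := abs_le.mp hkey
      linarith [this.2]
    -- exponentiate
    have h6 : g (w*y) ≤ g y * Real.exp (-(α+1) * Real.log w + ε * (|Real.log w| + 1)) := by
      have := Real.exp_le_exp.mpr (by linarith [hkey2] :
        Real.log (g (w*y)) ≤ Real.log (g y) + (-(α+1) * Real.log w + ε * (|Real.log w| + 1)))
      rwa [Real.exp_log hgwy, Real.exp_add, Real.exp_log hgy] at this
    refine le_trans h6 ?_
    rw [Real.exp_add, mul_add ε, mul_one, Real.exp_add]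
    have e1 : Real.exp (-(α+1) * Real.log w) = w ^ (-α-1) := by
      rw [Real.rpow_def_of_pos hw]; ring_nf
    have e2 : Real.exp (ε * |Real.log w|) ≤ w ^ ε + w ^ (-ε) := by
      rcases abs_cases (Real.log w) with ⟨habs, _⟩ | ⟨habs, _⟩
      · rw [habs]
        have : Real.exp (ε * Real.log w) = w ^ ε := by
          rw [Real.rpow_def_of_pos hw]; ring_nf
        rw [this]
        have : (0:ℝ) < w ^ (-ε) := rpow_pos_of_pos hw _
        linarith
      · rw [habs]
        have : Real.exp (ε * -Real.log w) = w ^ (-ε) := by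
          rw [Real.rpow_def_of_pos hw]; ring_nf
        rw [show ε * -Real.log w = ε * -Real.log w from rfl] at this
        rw [show Real.exp (ε * -Real.log w) = w ^ (-ε) from this]
        have : (0:ℝ) < w ^ ε := rpow_pos_of_pos hw _
        linarith
    calc g y * (Real.exp (-(α+1) * Real.log w) * (Real.exp (ε * |Real.log w|) * Real.exp ε))
        = Real.exp ε * (Real.exp (-(α+1) * Real.log w) * Real.exp (ε * |Real.log w|)) * g y := by
          ring
      _ ≤ Real.exp ε * (w ^ (-α-1) * (w ^ ε + w ^ (-ε))) * g y := by
          rw [e1]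
          apply mul_le_mul_of_nonneg_right _ hgy.le
          apply mul_le_mul_of_nonneg_left _ (exp_pos ε).le
          exact mul_le_mul_of_nonneg_left e2 (rpow_pos_of_pos hw _).le
  · -- lower bound
    intro y hy w hw1
    set Y₁ := max (Real.exp U') Y₀ with hY₁def
    have hY₁pos : (0:ℝ) < Y₁ := lt_of_lt_of_le hY₀pos (le_max_right _ _)
    have hy0 : (0:ℝ) < y := lt_of_lt_of_le hY₁pos hy
    have hw : (0:ℝ) < w := lt_of_lt_of_le zero_lt_one hw1
    have hwy0 : (0:ℝ) < w * y := mul_pos hw hy0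
    have hgy : 0 < g y := hpos y (le_trans (le_max_right _ _) hy)
    have hwyY : Y₁ ≤ w * y := le_trans hy (le_mul_of_one_le_left hy0.le hw1)
    have hgwy : 0 < g (w * y) := hpos _ (le_trans (le_max_right _ _) hwyY)
    have hlw : 0 ≤ Real.log w := Real.log_nonneg hw1
    have hu'y : U' ≤ Real.log y := by
      have h9 : Real.exp U' ≤ y := le_trans (le_max_left _ _) hy
      calc U' = Real.log (Real.exp U') := (Real.log_exp U').symm
        _ ≤ Real.log y := (Real.log_le_log_iff (exp_pos _) hy0).mpr h9
    have hkey := hU (Real.log y) (le_trans (le_max_left _ _) hu'y) (Real.log w) hlw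
    rw [← Real.log_mul hy0.ne' hw.ne', mul_comm y w] at hkey
    have hhy : h (Real.log y) = (α+1) * Real.log y + Real.log (g y) := by
      simp only [hdef]; rw [Real.exp_log hy0]
    have hhwy : h (Real.log (w*y)) = (α+1) * Real.log (w*y) + Real.log (g (w*y)) := by
      simp only [hdef]; rw [Real.exp_log hwy0]
    rw [hhy, hhwy, Real.log_mul hw.ne' hy0.ne'] at hkey
    have hkey2 : Real.log (g y) + (-(α+1) * Real.log w - ε * (Real.log w + 1))
        ≤ Real.log (g (w*y)) := by
      have := abs_le.mp hkey
      linarith [this.1]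
    have h6 : g y * Real.exp (-(α+1) * Real.log w - ε * (Real.log w + 1)) ≤ g (w*y) := by
      have := Real.exp_le_exp.mpr hkey2
      rwa [Real.exp_add, Real.exp_log hgy, Real.exp_log hgwy] at this
    refine le_trans ?_ h6
    have e1 : Real.exp (-(α+1) * Real.log w - ε * (Real.log w + 1))
        = Real.exp (-ε) * (w ^ (-α-1) * w ^ (-ε)) := by
      rw [show -(α+1) * Real.log w - ε * (Real.log w + 1)
          = (-α-1) * Real.log w + ((-ε) * Real.log w + (-ε)) by ring]
      rw [Real.exp_add, Real.exp_add]
      rw [Real.rpow_def_of_pos hw (-α-1), Real.rpow_def_of_pos hw (-ε)]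
      ring_nf
    rw [e1]; ring_nf; rfl


private lemma int_phi {g : ℝ → ℝ} (hgmeas : Measurable g) (hgnn : ∀ v > (0:ℝ), 0 ≤ g v)
    (hint : IntegrableOn (fun v => min (v ^ 2) v * g v) (Set.Ioi 0))
    {x : ℝ} (hx : 0 < x) :
    IntegrableOn (fun v => (Real.exp (-(x*v)) - 1 + x*v) * g v) (Set.Ioi 0) := by
  have hb : Integrable (fun v => max x (x^2) * (min (v ^ 2) v * g v))
      (volume.restrict (Ioi 0)) := hint.const_mul _
  refine hb.mono' ?_ ?_
  · exact ((((measurable_const.mul measurable_id).neg.exp.sub measurable_const).add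
      (measurable_const.mul measurable_id)).mul hgmeas).aestronglyMeasurable
  · filter_upwards [ae_restrict_mem measurableSet_Ioi] with v hv
    have hv0 : (0:ℝ) < v := hv
    have hxv : 0 ≤ x * v := by positivity
    have hphinn : 0 ≤ Real.exp (-(x*v)) - 1 + x*v := by
      have := Real.add_one_le_exp (-(x*v)); linarith
    have hgv : 0 ≤ g v := hgnn v hv0
    rw [Real.norm_eq_abs, abs_of_nonneg (mul_nonneg hphinn hgv)]
    rcases le_or_gt v 1 with hv1 | hv1
    · have hmin : min (v^2) v = v^2 := min_eq_left (by nlinarith)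
      have h1 : Real.exp (-(x*v)) - 1 + x*v ≤ (x*v)^2/2 := phi_le_sq hxv
      rw [hmin]
      have : (x*v)^2/2 ≤ max x (x^2) * v^2 := by
        have h2 : (x*v)^2/2 ≤ x^2 * v^2 := by nlinarith [sq_nonneg (x*v)]
        have h3 : x^2 * v^2 ≤ max x (x^2) * v^2 :=
          mul_le_mul_of_nonneg_right (le_max_right _ _) (sq_nonneg v)
        linarith
      calc (Real.exp (-(x*v)) - 1 + x*v) * g v ≤ ((x*v)^2/2) * g v :=
            mul_le_mul_of_nonneg_right h1 hgv
        _ ≤ (max x (x^2) * v^2) * g v := mul_le_mul_of_nonneg_right this hgv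
        _ = max x (x^2) * (v^2 * g v) := by ring
    · have hmin : min (v^2) v = v := min_eq_right (by nlinarith)
      have h1 : Real.exp (-(x*v)) - 1 + x*v ≤ x*v := by
        have : Real.exp (-(x*v)) ≤ 1 := Real.exp_le_one_iff.mpr (by linarith)
        linarith
      rw [hmin]
      calc (Real.exp (-(x*v)) - 1 + x*v) * g v ≤ (x*v) * g v :=
            mul_le_mul_of_nonneg_right h1 hgv
        _ ≤ (max x (x^2) * v) * g v := by
            apply mul_le_mul_of_nonneg_right _ hgv
            exact mul_le_mul_of_nonneg_right (le_max_left _ _) hv0.le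
        _ = max x (x^2) * (v * g v) := by ring

private lemma int_sq {g : ℝ → ℝ} (hgmeas : Measurable g) (hgnn : ∀ v > (0:ℝ), 0 ≤ g v)
    (hint : IntegrableOn (fun v => min (v ^ 2) v * g v) (Set.Ioi 0))
    {R : ℝ} (hR : 0 < R) :
    IntegrableOn (fun v => v^2 * g v) (Set.Ioc 0 R) := by
  have hb : Integrable (fun v => max R 1 * (min (v ^ 2) v * g v))
      (volume.restrict (Ioc 0 R)) :=
    ((hint.mono_set Ioc_subset_Ioi_self).const_mul _)
  refine hb.mono' ?_ ?_
  · exact ((measurable_id.pow_const 2).mul hgmeas).aestronglyMeasurable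
  · filter_upwards [ae_restrict_mem measurableSet_Ioc] with v hv
    have hv0 : (0:ℝ) < v := hv.1
    have hgv : 0 ≤ g v := hgnn v hv0
    rw [Real.norm_eq_abs, abs_of_nonneg (by positivity)]
    rcases le_or_gt v 1 with hv1 | hv1
    · have hmin : min (v^2) v = v^2 := min_eq_left (by nlinarith)
      rw [hmin]
      calc v^2 * g v = 1 * (v^2 * g v) := by ring
        _ ≤ max R 1 * (v^2 * g v) :=
            mul_le_mul_of_nonneg_right (le_max_right _ _) (by positivity)
    · have hmin : min (v^2) v = v := min_eq_right (by nlinarith)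
      rw [hmin]
      calc v^2 * g v ≤ (R * v) * g v := by
            apply mul_le_mul_of_nonneg_right _ hgv
            have : v ≤ R := hv.2
            nlinarith
        _ ≤ max R 1 * (v * g v) := by
            rw [show max R 1 * (v * g v) = (max R 1 * v) * g v by ring]
            apply mul_le_mul_of_nonneg_right _ hgv
            exact mul_le_mul_of_nonneg_right (le_max_left _ _) hv0.le

private lemma stepD {g : ℝ → ℝ} (hgmeas : Measurable g) (hgnn : ∀ v > (0:ℝ), 0 ≤ g v)
    (hint : IntegrableOn (fun v => min (v ^ 2) v * g v) (Set.Ioi 0))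
    (hinf : ∫⁻ v in Set.Ioi (0:ℝ), ENNReal.ofReal (v ^ 2 * g v) = ⊤)
    (M : ℝ) (hM : 0 < M) :
    ∀ᶠ x in 𝓝[>] (0:ℝ), M * x^2 ≤ ∫ v in Set.Ioi (0:ℝ), (Real.exp (-(x*v)) - 1 + x*v) * g v := by
  -- find R with ∫ v² g over (0, R] ≥ 4 M
  have hd : Measurable (fun v : ℝ => ENNReal.ofReal (v ^ 2 * g v)) :=
    ((measurable_id.pow_const 2).mul hgmeas).ennreal_ofReal
  set ν : Measure ℝ := volume.withDensity (fun v => ENNReal.ofReal (v ^ 2 * g v)) with hνdef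
  have hνIoi : ν (Ioi 0) = ⊤ := by rw [withDensity_apply _ measurableSet_Ioi]; exact hinf
  have hmono : Monotone (fun n : ℕ => Ioc (0:ℝ) (n:ℝ)) := fun m n hmn =>
    Ioc_subset_Ioc le_rfl (by exact_mod_cast hmn)
  have hunion : (⋃ n : ℕ, Ioc (0:ℝ) (n:ℝ)) = Ioi 0 := by
    ext v
    simp only [mem_iUnion, mem_Ioc, mem_Ioi]
    constructor
    · rintro ⟨n, h1, _⟩; exact h1
    · intro hv
      obtain ⟨n, hn⟩ := exists_nat_ge v
      exact ⟨n, hv, hn⟩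
  have htend : Tendsto (fun n : ℕ => ν (Ioc (0:ℝ) (n:ℝ))) atTop (𝓝 ⊤) := by
    have := tendsto_measure_iUnion_atTop (μ := ν) hmono
    rwa [hunion, hνIoi] at this
  have hev : ∀ᶠ n : ℕ in atTop, ENNReal.ofReal (4*M) < ν (Ioc (0:ℝ) (n:ℝ)) :=
    htend.eventually (eventually_gt_nhds ENNReal.ofReal_lt_top)
  obtain ⟨n, hn⟩ := hev.exists
  set R : ℝ := (n:ℝ) + 1 with hRdef
  have hR0 : 0 < R := by positivity
  have hnR : ν (Ioc (0:ℝ) R) ≥ ENNReal.ofReal (4*M) := by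
    refine le_trans hn.le (measure_mono (Ioc_subset_Ioc le_rfl (by linarith)))
  have hsqint : IntegrableOn (fun v => v^2 * g v) (Set.Ioc 0 R) := int_sq hgmeas hgnn hint hR0
  have hK : 4*M ≤ ∫ v in Ioc (0:ℝ) R, v^2 * g v := by
    have hnn : 0 ≤ᵐ[volume.restrict (Ioc (0:ℝ) R)] fun v => v^2 * g v := by
      filter_upwards [ae_restrict_mem measurableSet_Ioc] with v hv
      exact mul_nonneg (sq_nonneg v) (hgnn v hv.1)
    rw [integral_eq_lintegral_of_nonneg_ae hnn
      ((measurable_id.pow_const 2).mul hgmeas).aestronglyMeasurable]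
    have hfin : (∫⁻ v in Ioc (0:ℝ) R, ENNReal.ofReal (v^2 * g v)) ≠ ⊤ := by
      have h1 := hsqint.2
      rw [hasFiniteIntegral_iff_norm] at h1
      refine ne_of_lt (lt_of_le_of_lt ?_ h1)
      apply lintegral_mono
      intro v
      exact ENNReal.ofReal_le_ofReal (le_abs_self _)
    have h2 : ν (Ioc (0:ℝ) R) = ∫⁻ v in Ioc (0:ℝ) R, ENNReal.ofReal (v^2 * g v) :=
      withDensity_apply _ measurableSet_Ioc
    rw [h2] at hnR
    calc 4*M = (ENNReal.ofReal (4*M)).toReal := by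
          rw [ENNReal.toReal_ofReal (by positivity)]
      _ ≤ (∫⁻ v in Ioc (0:ℝ) R, ENNReal.ofReal (v^2 * g v)).toReal :=
          ENNReal.toReal_mono hfin hnR
  -- now the eventual bound
  filter_upwards [Ioo_mem_nhdsGT (by positivity : (0:ℝ) < 3/(2*R))] with x hx
  have hx0 : 0 < x := hx.1
  have hxR : x < 3/(2*R) := hx.2
  have step1 : ∫ v in Ioc (0:ℝ) R, x^2/4 * (v^2 * g v)
      ≤ ∫ v in Ioc (0:ℝ) R, (Real.exp (-(x*v)) - 1 + x*v) * g v := by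
    refine setIntegral_mono_on (hsqint.const_mul _)
      ((int_phi hgmeas hgnn hint hx0).mono_set Ioc_subset_Ioi_self) measurableSet_Ioc ?_
    intro v hv
    have hv0 : 0 < v := hv.1
    have hxv : 0 ≤ x*v := by positivity
    have hxv2 : x*v ≤ 3/2 := by
      have h3 : x * v ≤ x * R := mul_le_mul_of_nonneg_left hv.2 hx0.le
      have h4 : x * R < 3/2 := by
        rw [lt_div_iff₀ (by positivity : (0:ℝ) < 2*R)] at hxR
        nlinarith
      exact h3.trans h4.le
    calc x^2/4 * (v^2 * g v) = ((x*v)^2/4) * g v := by ring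
      _ ≤ (Real.exp (-(x*v)) - 1 + x*v) * g v :=
          mul_le_mul_of_nonneg_right (phi_ge hxv hxv2) (hgnn v hv0)
  have step2 : ∫ v in Ioc (0:ℝ) R, (Real.exp (-(x*v)) - 1 + x*v) * g v
      ≤ ∫ v in Ioi (0:ℝ), (Real.exp (-(x*v)) - 1 + x*v) * g v := by
    refine setIntegral_mono_set (int_phi hgmeas hgnn hint hx0) ?_
      (HasSubset.Subset.eventuallyLE Ioc_subset_Ioi_self)
    filter_upwards [ae_restrict_mem measurableSet_Ioi] with v hv
    exact mul_nonneg (phi_nonneg _) (hgnn v hv)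
  have step0 : M * x^2 ≤ ∫ v in Ioc (0:ℝ) R, x^2/4 * (v^2 * g v) := by
    rw [integral_const_mul]
    calc M * x^2 = x^2/4 * (4*M) := by ring
      _ ≤ x^2/4 * ∫ v in Ioc (0:ℝ) R, v^2 * g v :=
          mul_le_mul_of_nonneg_left hK (by positivity)
  linarith

private lemma aesm_rpow {c : ℝ} {s : Set ℝ} (hs : MeasurableSet s) (hsub : s ⊆ Set.Ioi 0) :
    AEStronglyMeasurable (fun w : ℝ => w ^ c) (volume.restrict s) := by
  have h1 : AEStronglyMeasurable (fun w : ℝ => Real.exp (Real.log w * c))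
      (volume.restrict s) :=
    ((Real.measurable_log.mul measurable_const).exp).aestronglyMeasurable
  apply h1.congr
  filter_upwards [ae_restrict_mem hs] with w hw
  exact (Real.rpow_def_of_pos (hsub hw) c).symm

set_option maxHeartbeats 1000000 in
/-- If the Lévy density `g` on `(0,∞)` satisfies `∫ (v² ∧ v) g(v) dv < ∞`,
`∫ v² g(v) dv = ∞`, is eventually positive, and varies regularly at `+∞` with index
`−α−1` for some `α ∈ (1,2)`, then the Laplace exponent
`J(b) = ∫ (e^{−bv} − 1 + bv) g(v) dv` varies regularly at `0` with index `α`. -/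
theorem stmt11 (g : ℝ → ℝ) (hgmeas : Measurable g) (hgnn : ∀ v > (0:ℝ), 0 ≤ g v)
    (hint : IntegrableOn (fun v => min (v ^ 2) v * g v) (Set.Ioi 0))
    (hinf : ∫⁻ v in Set.Ioi (0:ℝ), ENNReal.ofReal (v ^ 2 * g v) = ⊤)
    (hgpos : ∃ Y : ℝ, ∀ y ≥ Y, 0 < g y)
    (J : ℝ → ℝ)
    (hJ : ∀ b ≥ (0:ℝ),
      J b = ∫ v in Set.Ioi (0:ℝ), (Real.exp (-(b * v)) - 1 + b * v) * g v)
    (α : ℝ) (hα : α ∈ Set.Ioo (1:ℝ) 2)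
    (hreg : ∀ b > (0:ℝ), Tendsto (fun y => g (b * y) / g y) atTop (nhds (b ^ (-α - 1)))) :
    ∀ b > (0:ℝ), Tendsto (fun x => J (b * x) / J x) (nhdsWithin 0 (Set.Ioi 0))
      (nhds (b ^ α)) := by
  obtain ⟨hα1, hα2⟩ := hα
  obtain ⟨Y₀', hY₀'⟩ := hgpos
  set Y₀ : ℝ := max Y₀' 1 with hY₀def
  have hY₀1 : (1:ℝ) ≤ Y₀ := le_max_right _ _
  have hY₀pos : ∀ y ≥ Y₀, 0 < g y := fun y hy => hY₀' y ((le_max_left _ _).trans hy)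
  set ε0 : ℝ := min (α - 1) (2 - α) / 2 with hε0def
  have hmin_pos : 0 < min (α - 1) (2 - α) := lt_min (by linarith) (by linarith)
  have hε0pos : 0 < ε0 := by rw [hε0def]; positivity
  have hε0a : ε0 < α - 1 := by
    have h := min_le_left (α - 1) (2 - α)
    rw [hε0def]; linarith
  have hε0b : ε0 < 2 - α := by
    have h := min_le_right (α - 1) (2 - α)
    rw [hε0def]; linarith
  obtain ⟨Y₁, hY₁Y₀, hY₁1, hPup, hPlo⟩ := potter g hgmeas α Y₀ hY₀1 hY₀pos hreg ε0 hε0pos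
  have hY₁pos : (0:ℝ) < Y₁ := lt_of_lt_of_le zero_lt_one hY₁1
  set C : ℝ := Real.exp ε0 with hCdef
  have hC1 : 1 ≤ C := Real.one_le_exp hε0pos.le
  have hCpos : 0 < C := lt_of_lt_of_le zero_lt_one hC1
  intro b hb
  set Jint : ℝ → ℝ :=
    fun x => ∫ v in Set.Ioi (0:ℝ), (Real.exp (-(x * v)) - 1 + x * v) * g v with hJintdef
  set A : ℝ → ℝ :=
    fun x => ∫ v in Set.Ioi Y₁, (Real.exp (-(x * v)) - 1 + x * v) * g v with hAdef
  set B : ℝ → ℝ :=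
    fun x => ∫ v in Set.Ioc (0:ℝ) Y₁, (Real.exp (-(x * v)) - 1 + x * v) * g v with hBdef
  set D : ℝ → ℝ := fun x => x⁻¹ * g x⁻¹ with hDdef
  set K₁ : ℝ := ∫ v in Set.Ioc (0:ℝ) Y₁, v ^ 2 * g v with hK₁def
  set Fi : ℝ → ℝ → ℝ := fun x => Set.indicator (Set.Ioi (x * Y₁))
    (fun w => (Real.exp (-w) - 1 + w) * (g (x⁻¹ * w) / g x⁻¹)) with hFidef
  set Gg : ℝ → ℝ := fun x => ∫ w in Set.Ioi (0:ℝ), Fi x w with hGgdef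
  set flim : ℝ → ℝ := fun w => (Real.exp (-w) - 1 + w) * w ^ (-α - 1) with hflimdef
  set C0 : ℝ := ∫ w in Set.Ioi (0:ℝ), flim w with hC0def
  set bound : ℝ → ℝ :=
    fun w => C * (min (w ^ 2) w * (w ^ (-α - 1) * (w ^ ε0 + w ^ (-ε0)))) with hbddef
  -- membership helper
  have hXinv : ∀ x, x ∈ Set.Ioo (0:ℝ) Y₁⁻¹ → Y₁ < x⁻¹ := by
    intro x hx
    have h1 : x⁻¹ > (Y₁⁻¹)⁻¹ := by
      apply inv_strictAnti₀ hx.1 hx.2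
    rwa [inv_inv] at h1
  have hgxpos : ∀ x, x ∈ Set.Ioo (0:ℝ) Y₁⁻¹ → 0 < g x⁻¹ := fun x hx =>
    hY₀pos _ (le_trans (hY₁Y₀.trans (hXinv x hx).le) le_rfl)
  have hDpos : ∀ x, x ∈ Set.Ioo (0:ℝ) Y₁⁻¹ → 0 < D x := fun x hx =>
    mul_pos (inv_pos.mpr hx.1) (hgxpos x hx)
  -- integrability of bound
  have hbnn : ∀ w : ℝ, 0 < w → 0 ≤ bound w := by
    intro w hw0
    simp only [hbddef]
    apply mul_nonneg hCpos.le
    apply mul_nonneg (le_min (sq_nonneg w) hw0.le)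
    apply mul_nonneg (Real.rpow_nonneg hw0.le _)
    exact add_nonneg (Real.rpow_nonneg hw0.le _) (Real.rpow_nonneg hw0.le _)
  have hbmeas : ∀ (s : Set ℝ), MeasurableSet s → s ⊆ Set.Ioi 0 →
      AEStronglyMeasurable bound (volume.restrict s) := by
    intro s hs hsub
    refine AEStronglyMeasurable.const_mul ?_ C
    refine AEStronglyMeasurable.mul ?_ ?_
    · exact ((measurable_id.pow_const 2).min measurable_id).aestronglyMeasurable
    · exact (aesm_rpow hs hsub).mul ((aesm_rpow hs hsub).add (aesm_rpow hs hsub))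
  have h_bound_int : IntegrableOn bound (Set.Ioi 0) := by
    have hpart1 : IntegrableOn bound (Set.Ioc 0 1) := by
      rw [integrableOn_Ioc_iff_integrableOn_Ioo]
      have hbase : Integrable (fun w : ℝ => 2*C * w ^ (1-α-ε0))
          (volume.restrict (Set.Ioo (0:ℝ) 1)) := by
        refine Integrable.const_mul ?_ _
        exact (intervalIntegral.integrableOn_Ioo_rpow_iff zero_lt_one).mpr (by linarith)
      refine hbase.mono' (hbmeas _ measurableSet_Ioo (fun w hw => hw.1)) ?_
      filter_upwards [ae_restrict_mem measurableSet_Ioo] with w hw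
      have hw0 : (0:ℝ) < w := hw.1
      have hw1 : w < 1 := hw.2
      rw [Real.norm_eq_abs, abs_of_nonneg (hbnn w hw0)]
      have hmin : min (w^2) w = w^2 := min_eq_left (by nlinarith)
      have hS : w ^ ε0 + w ^ (-ε0) ≤ 2 * w ^ (-ε0) := by
        have := Real.rpow_le_rpow_of_exponent_ge hw0 hw1.le
          (by linarith : -ε0 ≤ ε0)
        linarith
      have hcomb : w ^ ((2:ℕ):ℝ) * (w ^ (-α-1) * w ^ (-ε0)) = w ^ (1-α-ε0) := by
        rw [← Real.rpow_add hw0, ← Real.rpow_add hw0]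
        congr 1
        push_cast
        ring
      calc bound w = C * (w^2 * (w ^ (-α-1) * (w ^ ε0 + w ^ (-ε0)))) := by
            simp only [hbddef]; rw [hmin]
        _ ≤ C * (w^2 * (w ^ (-α-1) * (2 * w ^ (-ε0)))) := by
            apply mul_le_mul_of_nonneg_left _ hCpos.le
            apply mul_le_mul_of_nonneg_left _ (sq_nonneg w)
            exact mul_le_mul_of_nonneg_left hS (Real.rpow_nonneg hw0.le _)
        _ = 2*C * (w ^ ((2:ℕ):ℝ) * (w ^ (-α-1) * w ^ (-ε0))) := by
            rw [Real.rpow_natCast w 2]; ring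
        _ = 2*C * w ^ (1-α-ε0) := by rw [hcomb]
    have hpart2 : IntegrableOn bound (Set.Ioi 1) := by
      have hbase : Integrable (fun w : ℝ => 2*C * w ^ (-α+ε0))
          (volume.restrict (Set.Ioi (1:ℝ))) := by
        refine Integrable.const_mul ?_ _
        exact integrableOn_Ioi_rpow_of_lt (by linarith) zero_lt_one
      refine hbase.mono' (hbmeas _ measurableSet_Ioi
        (fun w (hw : (1:ℝ) < w) => (lt_trans zero_lt_one hw : (0:ℝ) < w))) ?_
      filter_upwards [ae_restrict_mem measurableSet_Ioi] with w hw
      have hw1 : (1:ℝ) < w := hw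
      have hw0 : (0:ℝ) < w := lt_trans zero_lt_one hw1
      rw [Real.norm_eq_abs, abs_of_nonneg (hbnn w hw0)]
      have hmin : min (w^2) w ≤ w := min_le_right _ _
      have hS : w ^ ε0 + w ^ (-ε0) ≤ 2 * w ^ ε0 := by
        have := Real.rpow_le_rpow_of_exponent_le hw1.le (by linarith : -ε0 ≤ ε0)
        linarith
      have hcomb : w ^ ((1:ℕ):ℝ) * (w ^ (-α-1) * w ^ ε0) = w ^ (-α+ε0) := by
        rw [← Real.rpow_add hw0, ← Real.rpow_add hw0]
        congr 1
        push_cast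
        ring
      have hrS : 0 ≤ w ^ (-α-1) * (w ^ ε0 + w ^ (-ε0)) :=
        mul_nonneg (Real.rpow_nonneg hw0.le _)
          (add_nonneg (Real.rpow_nonneg hw0.le _) (Real.rpow_nonneg hw0.le _))
      calc bound w ≤ C * (w * (w ^ (-α-1) * (w ^ ε0 + w ^ (-ε0)))) := by
            simp only [hbddef]
            apply mul_le_mul_of_nonneg_left _ hCpos.le
            exact mul_le_mul_of_nonneg_right hmin hrS
        _ ≤ C * (w * (w ^ (-α-1) * (2 * w ^ ε0))) := by
            apply mul_le_mul_of_nonneg_left _ hCpos.le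
            apply mul_le_mul_of_nonneg_left _ hw0.le
            exact mul_le_mul_of_nonneg_left hS (Real.rpow_nonneg hw0.le _)
        _ = 2*C * (w ^ ((1:ℕ):ℝ) * (w ^ (-α-1) * w ^ ε0)) := by
            rw [Real.rpow_natCast w 1, pow_one]; ring
        _ = 2*C * w ^ (-α+ε0) := by rw [hcomb]
    have hu : Set.Ioc (0:ℝ) 1 ∪ Set.Ioi 1 = Set.Ioi 0 := Ioc_union_Ioi_eq_Ioi zero_le_one
    rw [← hu]
    exact hpart1.union hpart2
  have hSge1 : ∀ w : ℝ, 0 < w → (1:ℝ) ≤ w ^ ε0 + w ^ (-ε0) := by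
    intro w hw0
    rcases le_or_gt 1 w with hw1 | hw1
    · have h1 : (1:ℝ) ≤ w ^ ε0 := by
        rw [show (1:ℝ) = 1 ^ ε0 by rw [Real.one_rpow]]
        exact Real.rpow_le_rpow zero_le_one hw1 hε0pos.le
      have h2 : 0 ≤ w ^ (-ε0) := Real.rpow_nonneg hw0.le _
      linarith
    · have h1 : (1:ℝ) ≤ w ^ (-ε0) :=
        Real.one_le_rpow_of_pos_of_le_one_of_nonpos hw0 hw1.le (by linarith)
      have h2 : 0 ≤ w ^ ε0 := Real.rpow_nonneg hw0.le _
      linarith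
  have h_flim_le : ∀ w : ℝ, 0 < w → flim w ≤ bound w := by
    intro w hw0
    have hphile : Real.exp (-w) - 1 + w ≤ min (w^2) w := by
      refine le_min ?_ (phi_le_lin hw0.le)
      have := phi_le_sq hw0.le
      nlinarith [sq_nonneg w]
    have hr0 : (0:ℝ) ≤ w ^ (-α-1) := Real.rpow_nonneg hw0.le _
    calc flim w ≤ min (w^2) w * w ^ (-α-1) :=
          mul_le_mul_of_nonneg_right hphile hr0
      _ ≤ min (w^2) w * (w ^ (-α-1) * (w ^ ε0 + w ^ (-ε0))) := by
          apply mul_le_mul_of_nonneg_left _ (le_min (sq_nonneg w) hw0.le)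
          calc w ^ (-α-1) = w ^ (-α-1) * 1 := by ring
            _ ≤ w ^ (-α-1) * (w ^ ε0 + w ^ (-ε0)) :=
                mul_le_mul_of_nonneg_left (hSge1 w hw0) hr0
      _ ≤ bound w := by
          simp only [hbddef]
          calc min (w^2) w * (w ^ (-α-1) * (w ^ ε0 + w ^ (-ε0)))
              = 1 * (min (w^2) w * (w ^ (-α-1) * (w ^ ε0 + w ^ (-ε0)))) := by ring
            _ ≤ C * (min (w^2) w * (w ^ (-α-1) * (w ^ ε0 + w ^ (-ε0)))) := by
                apply mul_le_mul_of_nonneg_right hC1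
                exact mul_nonneg (le_min (sq_nonneg w) hw0.le)
                  (mul_nonneg (Real.rpow_nonneg hw0.le _)
                    (add_nonneg (Real.rpow_nonneg hw0.le _) (Real.rpow_nonneg hw0.le _)))
  have h_flim_nn : ∀ w : ℝ, 0 < w → 0 ≤ flim w := by
    intro w hw0
    exact mul_nonneg (phi_nonneg w) (Real.rpow_nonneg hw0.le _)
  have h_flim_int : IntegrableOn flim (Set.Ioi 0) := by
    refine h_bound_int.mono' ?_ ?_
    · exact (((measurable_exp.comp measurable_neg).sub measurable_const).add
        measurable_id).aestronglyMeasurable.mul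
        (aesm_rpow measurableSet_Ioi (fun w hw => hw))
    · filter_upwards [ae_restrict_mem measurableSet_Ioi] with w hw
      have hw0 : (0:ℝ) < w := hw
      rw [Real.norm_eq_abs, abs_of_nonneg (h_flim_nn w hw0)]
      exact h_flim_le w hw0
  have hC0pos : 0 < C0 := by
    have hsub : Set.Ioc (1:ℝ) (3/2) ⊆ Set.Ioi (0:ℝ) := fun w hw =>
      lt_trans zero_lt_one hw.1
    have hlow : ∀ w ∈ Set.Ioc (1:ℝ) (3/2), (1/4) * (3/2:ℝ) ^ (-α-1) ≤ flim w := by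
      intro w hw
      have hw1 : 1 < w := hw.1
      have hw0 : (0:ℝ) < w := lt_trans zero_lt_one hw1
      have h1 : (1:ℝ)/4 ≤ Real.exp (-w) - 1 + w := by
        have := phi_ge hw0.le hw.2
        nlinarith
      have h2 : (3/2:ℝ) ^ (-α-1) ≤ w ^ (-α-1) :=
        Real.rpow_le_rpow_of_nonpos hw0 hw.2 (by linarith)
      exact mul_le_mul h1 h2 (Real.rpow_nonneg (by norm_num) _) (by linarith [phi_nonneg w])
    have hstep1 : (0:ℝ) < (1/4) * (3/2:ℝ) ^ (-α-1) * (1/2) := by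
      have := Real.rpow_pos_of_pos (by norm_num : (0:ℝ) < 3/2) (-α-1)
      positivity
    have hstep2 : (1/4) * (3/2:ℝ) ^ (-α-1) * (1/2)
        ≤ ∫ w in Set.Ioc (1:ℝ) (3/2), flim w := by
      have hconst : ∫ _ in Set.Ioc (1:ℝ) (3/2), ((1/4) * (3/2:ℝ) ^ (-α-1))
          = (1/4) * (3/2:ℝ) ^ (-α-1) * (1/2) := by
        rw [setIntegral_const, measureReal_def, Real.volume_Ioc, smul_eq_mul]
        rw [ENNReal.toReal_ofReal (by norm_num)]
        ring
      rw [← hconst]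
      refine setIntegral_mono_on ?_ (h_flim_int.mono_set hsub) measurableSet_Ioc hlow
      refine (integrableOn_const_iff).mpr (Or.inr ?_)
      rw [Real.volume_Ioc]
      exact ENNReal.ofReal_lt_top
    have hstep3 : ∫ w in Set.Ioc (1:ℝ) (3/2), flim w ≤ C0 := by
      refine setIntegral_mono_set h_flim_int ?_ (HasSubset.Subset.eventuallyLE hsub)
      filter_upwards [ae_restrict_mem measurableSet_Ioi] with w hw
      exact h_flim_nn w hw
    linarith
  have hDCT : Tendsto Gg (𝓝[>] (0:ℝ)) (𝓝 C0) := by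
    simp only [hGgdef, hC0def]
    refine tendsto_integral_filter_of_dominated_convergence bound ?_ ?_ ?_ ?_
    · apply Filter.Eventually.of_forall
      intro x
      apply AEStronglyMeasurable.indicator _ measurableSet_Ioi
      exact ((((measurable_exp.comp measurable_neg).sub measurable_const).add
        measurable_id).mul
        ((hgmeas.comp (measurable_const_mul x⁻¹)).div_const _)).aestronglyMeasurable
    · filter_upwards [Ioo_mem_nhdsGT (inv_pos.mpr hY₁pos)] with x hx
      filter_upwards [ae_restrict_mem measurableSet_Ioi] with w hw
      have hx0 : 0 < x := hx.1
      have hw0 : (0:ℝ) < w := hw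
      have hgx : 0 < g x⁻¹ := hgxpos x hx
      by_cases hmem : w ∈ Set.Ioi (x * Y₁)
      · simp only [hFidef]
        rw [Set.indicator_of_mem hmem]
        have hwY : x * Y₁ < w := hmem
        have hwyY : Y₁ ≤ w * x⁻¹ := by
          have h5 : x * Y₁ ≤ w := hwY.le
          calc Y₁ = (x * Y₁) * x⁻¹ := by field_simp
            _ ≤ w * x⁻¹ := mul_le_mul_of_nonneg_right h5 (inv_pos.mpr hx0).le
        have hratio : g (x⁻¹ * w) / g x⁻¹ ≤ C * (w ^ (-α-1) * (w ^ ε0 + w ^ (-ε0))) := by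
          have h6 := hPup x⁻¹ (hXinv x hx).le w hw0 hwyY
          rw [mul_comm w x⁻¹] at h6
          rw [div_le_iff₀ hgx]
          exact h6
        have hphi : 0 ≤ Real.exp (-w) - 1 + w := phi_nonneg w
        have hgnn' : 0 ≤ g (x⁻¹ * w) := hgnn _ (by positivity)
        rw [Real.norm_eq_abs, abs_of_nonneg (mul_nonneg hphi (div_nonneg hgnn' hgx.le))]
        have hphile : Real.exp (-w) - 1 + w ≤ min (w^2) w := by
          refine le_min ?_ (phi_le_lin hw0.le)
          have := phi_le_sq hw0.le
          nlinarith [sq_nonneg w]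
        calc (Real.exp (-w) - 1 + w) * (g (x⁻¹ * w) / g x⁻¹)
            ≤ min (w^2) w * (C * (w ^ (-α-1) * (w ^ ε0 + w ^ (-ε0)))) :=
              mul_le_mul hphile hratio (div_nonneg hgnn' hgx.le)
                (le_min (sq_nonneg w) hw0.le)
          _ = bound w := by simp only [hbddef]; ring
      · simp only [hFidef]
        rw [Set.indicator_of_notMem hmem]
        simpa using hbnn w hw0
    · exact h_bound_int
    · filter_upwards [ae_restrict_mem measurableSet_Ioi] with w hw
      have hw0 : (0:ℝ) < w := hw
      have h1 : Tendsto (fun x : ℝ => g (w * x⁻¹) / g x⁻¹) (𝓝[>] (0:ℝ))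
          (𝓝 (w ^ (-α-1))) := (hreg w hw0).comp tendsto_inv_nhdsGT_zero
      have h2 := h1.const_mul (Real.exp (-w) - 1 + w)
      refine h2.congr' ?_
      filter_upwards [Ioo_mem_nhdsGT (div_pos hw0 hY₁pos)] with x hx
      have hmem : w ∈ Set.Ioi (x * Y₁) := by
        simp only [Set.mem_Ioi]
        have h7 := hx.2
        rw [lt_div_iff₀ hY₁pos] at h7
        exact h7
      simp only [hFidef]
      rw [Set.indicator_of_mem hmem, mul_comm w x⁻¹]
  have hsplit : ∀ x, 0 < x → Jint x = B x + A x := by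
    intro x hx0
    have hI := int_phi hgmeas hgnn hint hx0
    have hu : Set.Ioc (0:ℝ) Y₁ ∪ Set.Ioi Y₁ = Set.Ioi (0:ℝ) := Ioc_union_Ioi_eq_Ioi hY₁pos.le
    simp only [hJintdef, hAdef, hBdef]
    rw [← hu, setIntegral_union (Ioc_disjoint_Ioi le_rfl) measurableSet_Ioi
      (hI.mono_set (by rw [← hu]; exact subset_union_left))
      (hI.mono_set (by rw [← hu]; exact subset_union_right))]
  have hB0 : ∀ x, 0 < x → 0 ≤ B x := by
    intro x hx0
    simp only [hBdef]
    apply setIntegral_nonneg measurableSet_Ioc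
    intro v hv
    exact mul_nonneg (phi_nonneg _) (hgnn v hv.1)
  have hK₁0 : 0 ≤ K₁ := by
    simp only [hK₁def]
    apply setIntegral_nonneg measurableSet_Ioc
    intro v hv
    exact mul_nonneg (sq_nonneg v) (hgnn v hv.1)
  have hBle : ∀ x, 0 < x → B x ≤ x^2/2 * K₁ := by
    intro x hx0
    have hsq := int_sq hgmeas hgnn hint hY₁pos
    have h1 : B x ≤ ∫ v in Set.Ioc (0:ℝ) Y₁, x^2/2 * (v^2 * g v) := by
      refine setIntegral_mono_on
        ((int_phi hgmeas hgnn hint hx0).mono_set Ioc_subset_Ioi_self)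
        (hsq.const_mul _) measurableSet_Ioc ?_
      intro v hv
      have hv0 : 0 < v := hv.1
      have hxv : (0:ℝ) ≤ x * v := by positivity
      calc (Real.exp (-(x*v)) - 1 + x*v) * g v ≤ ((x*v)^2/2) * g v :=
          mul_le_mul_of_nonneg_right (phi_le_sq hxv) (hgnn v hv0)
        _ = x^2/2 * (v^2 * g v) := by ring
    rwa [integral_const_mul] at h1
  have hAeq : ∀ x, x ∈ Set.Ioo (0:ℝ) Y₁⁻¹ → A x = D x * Gg x := by
    intro x hx
    have hx0 : 0 < x := hx.1
    have hgx : 0 < g x⁻¹ := hgxpos x hx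
    have hxY : 0 < x * Y₁ := mul_pos hx0 hY₁pos
    have h1 : Gg x = ∫ w in Set.Ioi (x*Y₁),
        (Real.exp (-w) - 1 + w) * (g (x⁻¹ * w) / g x⁻¹) := by
      simp only [hGgdef, hFidef]
      rw [integral_indicator measurableSet_Ioi,
        Measure.restrict_restrict measurableSet_Ioi, Set.Ioi_inter_Ioi,
        max_eq_left hxY.le]
    have h2 : g x⁻¹ * Gg x = ∫ w in Set.Ioi (x*Y₁),
        (Real.exp (-w) - 1 + w) * g (x⁻¹ * w) := by
      rw [h1, ← integral_const_mul]
      refine setIntegral_congr_fun measurableSet_Ioi ?_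
      intro w hw
      have hgx' : g x⁻¹ ≠ 0 := hgx.ne'
      show g x⁻¹ * ((Real.exp (-w) - 1 + w) * (g (x⁻¹ * w) / g x⁻¹))
          = (Real.exp (-w) - 1 + w) * g (x⁻¹ * w)
      rw [mul_comm (g x⁻¹), mul_assoc, div_mul_cancel₀ _ hgx']
    have h3 : A x = x⁻¹ • ∫ w in Set.Ioi (x*Y₁),
        (Real.exp (-w) - 1 + w) * g (x⁻¹ * w) := by
      have h4 := integral_comp_mul_left_Ioi
        (fun w => (Real.exp (-w) - 1 + w) * g (x⁻¹ * w)) Y₁ hx0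
      have h5 : A x = ∫ v in Set.Ioi Y₁,
          (fun w => (Real.exp (-w) - 1 + w) * g (x⁻¹ * w)) (x * v) := by
        simp only [hAdef]
        refine setIntegral_congr_fun measurableSet_Ioi (fun v hv => ?_)
        show (Real.exp (-(x * v)) - 1 + x * v) * g v
            = (Real.exp (-(x * v)) - 1 + x * v) * g (x⁻¹ * (x * v))
        rw [inv_mul_cancel_left₀ hx0.ne']
      exact h5.trans h4
    rw [h3, ← h2]
    simp only [hDdef, smul_eq_mul]
    ring
  have hApos : ∀ᶠ x in 𝓝[>] (0:ℝ), 0 < A x ∧ 0 < Jint x := by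
    filter_upwards [stepD hgmeas hgnn hint hinf (K₁/2 + 1) (by linarith),
      self_mem_nhdsWithin] with x hx1 hx2
    have hx0 : (0:ℝ) < x := hx2
    have hJ1 : (K₁/2 + 1) * x^2 ≤ Jint x := hx1
    have hB1 := hBle x hx0
    have hA1 : A x = Jint x - B x := by rw [hsplit x hx0]; ring
    constructor
    · rw [hA1]; nlinarith [sq_nonneg x, pow_pos hx0 2]
    · nlinarith [pow_pos hx0 2]
  have hBA : Tendsto (fun x => B x / A x) (𝓝[>] (0:ℝ)) (𝓝 0) := by
    rw [NormedAddCommGroup.tendsto_nhds_zero]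
    intro ε hε
    have hM : (0:ℝ) < K₁/2 + (K₁+1)/ε := by positivity
    filter_upwards [stepD hgmeas hgnn hint hinf _ hM, self_mem_nhdsWithin] with x hx1 hx2
    have hx0 : (0:ℝ) < x := hx2
    have hx2pos : (0:ℝ) < x^2 := by positivity
    have hA1 : A x = Jint x - B x := by rw [hsplit x hx0]; ring
    have hBlex := hBle x hx0
    have hAge : (K₁+1)/ε * x^2 ≤ A x := by
      rw [hA1]
      nlinarith [hx1]
    have hApos' : (0:ℝ) < A x := lt_of_lt_of_le (by positivity) hAge
    have hBx := hB0 x hx0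
    rw [Real.norm_eq_abs, abs_of_nonneg (div_nonneg hBx hApos'.le)]
    have hdiv : B x / A x ≤ (K₁/2 * x^2) / ((K₁+1)/ε * x^2) := by
      refine div_le_div₀ (by positivity) ?_ (by positivity) hAge
      calc B x ≤ x^2/2 * K₁ := hBlex
        _ = K₁/2 * x^2 := by ring
    refine lt_of_le_of_lt hdiv ?_
    rw [mul_div_mul_right _ _ hx2pos.ne']
    rw [div_lt_iff₀ (by positivity : (0:ℝ) < (K₁+1)/ε)]
    have hfe : ε * ((K₁+1)/ε) = K₁+1 := by field_simp
    rw [hfe]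
    linarith
  have hH : Tendsto (fun x => Jint x / D x) (𝓝[>] (0:ℝ)) (𝓝 C0) := by
    have h1 : Tendsto (fun x => (B x / A x + 1) * Gg x) (𝓝[>] (0:ℝ)) (𝓝 ((0 + 1) * C0)) :=
      (hBA.add tendsto_const_nhds).mul hDCT
    rw [show ((0:ℝ) + 1) * C0 = C0 by ring] at h1
    apply h1.congr'
    filter_upwards [hApos, Ioo_mem_nhdsGT (inv_pos.mpr hY₁pos)] with x hA hx
    have hx0 : 0 < x := hx.1
    have hD := hDpos x hx
    have hGg : A x = D x * Gg x := hAeq x hx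
    have hgg : Gg x = A x / D x := by rw [hGg]; field_simp
    rw [hsplit x hx0, hgg]
    field_simp
    rw [mul_add, mul_div_cancel₀ _ hA.1.ne', mul_one]
  have hbx : Tendsto (fun x => b * x) (𝓝[>] (0:ℝ)) (𝓝[>] (0:ℝ)) := by
    rw [tendsto_nhdsWithin_iff]
    constructor
    · have hcont : Tendsto (fun x : ℝ => b * x) (𝓝 0) (𝓝 (b * 0)) :=
        (continuous_mul_left b).tendsto 0
      rw [mul_zero] at hcont
      exact hcont.mono_left nhdsWithin_le_nhds
    · filter_upwards [self_mem_nhdsWithin] with x hx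
      exact mul_pos hb hx
  have hDD : Tendsto (fun x => D (b*x) / D x) (𝓝[>] (0:ℝ)) (𝓝 (b ^ α)) := by
    have h1 : Tendsto (fun x : ℝ => g (b⁻¹ * x⁻¹) / g x⁻¹) (𝓝[>] (0:ℝ))
        (𝓝 ((b⁻¹ : ℝ) ^ (-α-1))) := (hreg b⁻¹ (inv_pos.mpr hb)).comp tendsto_inv_nhdsGT_zero
    have h2 : Tendsto (fun x : ℝ => b⁻¹ * (g (b⁻¹ * x⁻¹) / g x⁻¹)) (𝓝[>] (0:ℝ))
        (𝓝 (b⁻¹ * (b⁻¹ : ℝ) ^ (-α-1))) := h1.const_mul _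
    have h3 : b⁻¹ * (b⁻¹ : ℝ) ^ (-α-1) = b ^ α := by
      rw [← Real.rpow_neg_one b, ← Real.rpow_mul hb.le, ← Real.rpow_add hb]
      congr 1
      ring
    rw [h3] at h2
    refine h2.congr' ?_
    filter_upwards [Ioo_mem_nhdsGT (inv_pos.mpr hY₁pos)] with x hx
    have hx0 : 0 < x := hx.1
    have hgx : g x⁻¹ ≠ 0 := (hgxpos x hx).ne'
    simp only [hDdef]
    rw [mul_inv]
    rw [eq_div_iff (mul_ne_zero (inv_ne_zero hx0.ne') hgx)]
    calc b⁻¹ * (g (b⁻¹ * x⁻¹) / g x⁻¹) * (x⁻¹ * g x⁻¹)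
        = b⁻¹ * x⁻¹ * g (b⁻¹ * x⁻¹) * (g x⁻¹ / g x⁻¹) := by ring
      _ = b⁻¹ * x⁻¹ * g (b⁻¹ * x⁻¹) := by rw [div_self hgx, mul_one]
  -- final assembly
  have hfinal : Tendsto (fun x => (Jint (b*x) / D (b*x)) * (D (b*x) / D x) * (Jint x / D x)⁻¹)
      (𝓝[>] (0:ℝ)) (𝓝 (C0 * b ^ α * C0⁻¹)) :=
    ((hH.comp hbx).mul hDD).mul (hH.inv₀ hC0pos.ne')
  rw [show C0 * b ^ α * C0⁻¹ = b ^ α by field_simp] at hfinal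
  apply hfinal.congr'
  filter_upwards [hApos, hbx.eventually hApos, Ioo_mem_nhdsGT (inv_pos.mpr hY₁pos),
    hbx.eventually (Ioo_mem_nhdsGT (inv_pos.mpr hY₁pos)),
    self_mem_nhdsWithin] with x hx1 hx2 hx3 hx4 hx5
  have hx0 : (0:ℝ) < x := hx5
  have hbx0 : 0 < b * x := mul_pos hb hx0
  have hD1 : 0 < D x := hDpos x hx3
  have hD2 : 0 < D (b*x) := hDpos (b*x) hx4
  have hJx : J x = Jint x := hJ x hx0.le
  have hJbx : J (b*x) = Jint (b*x) := hJ (b*x) hbx0.le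
  rw [hJx, hJbx]
  have h1 : Jint x ≠ 0 := hx1.2.ne'
  field_simp
end
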